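/- Let G be a connected graph on n nodes with adjacency matrix A_adj and degree matrix D = diag(A_adj·1), all degrees positive, and define the graph Dirichlet energy E(X) := (1/2)·Σ over edges (i,j) of ‖X_{i,:}/√d_i − X_{j,:}/√d_j‖₂². Let v := D^{1/2}·1/‖D^{1/2}·1‖₂. Then there exist constants C₁, C₂ > 0 such that for all X ∈ ℝ^{n×k}: C₁·μ_v(X) ≤ E(X) ≤ C₂·μ_v(X). -/
import Mathlib


open Matrix

/-- `μ_v(X) = ‖X − v·vᵀ·X‖_F²`. -/
noncomputable def muV {n k : ℕ} (v : Fin n → ℝ) (X : Matrix (Fin n) (Fin k) ℝ) : ℝ :=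
  ∑ r, ∑ j, ((X - (Matrix.of fun a b => v a * v b) * X) r j) ^ 2

/-- Graph Dirichlet energy `E(X) = (1/2)·Σ_{edges (i,j)} ‖X_{i,:}/√d_i − X_{j,:}/√d_j‖₂²`.
Each undirected edge appears twice in the double sum over ordered adjacent pairs, whence the
factor `1/4`. -/
noncomputable def dirichletEnergy {n k : ℕ} (G : SimpleGraph (Fin n)) [DecidableRel G.Adj]
    (X : Matrix (Fin n) (Fin k) ℝ) : ℝ :=
  (1 / 4) * ∑ i, ∑ j,
    if G.Adj i j then
      ∑ c, (X i c / Real.sqrt (G.degree i) - X j c / Real.sqrt (G.degree j)) ^ 2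
    else 0

/-- Column quadratic form of the Dirichlet energy. -/
noncomputable def qform {n : ℕ} (G : SimpleGraph (Fin n)) [DecidableRel G.Adj]
    (y : Fin n → ℝ) : ℝ :=
  (1 / 4) * ∑ i, ∑ j, if G.Adj i j then
    (y i / Real.sqrt (G.degree i) - y j / Real.sqrt (G.degree j)) ^ 2 else 0

lemma qform_nonneg {n : ℕ} (G : SimpleGraph (Fin n)) [DecidableRel G.Adj]
    (y : Fin n → ℝ) : 0 ≤ qform G y := by
  unfold qform
  have h : (0:ℝ) ≤ ∑ i, ∑ j, (if G.Adj i j then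
      (y i / Real.sqrt (G.degree i) - y j / Real.sqrt (G.degree j)) ^ 2 else 0) := by
    apply Finset.sum_nonneg; intro i _
    apply Finset.sum_nonneg; intro j _
    split <;> positivity
  linarith

lemma qform_zero {n : ℕ} (G : SimpleGraph (Fin n)) [DecidableRel G.Adj] :
    qform G (0 : Fin n → ℝ) = 0 := by
  simp [qform]

lemma qform_smul {n : ℕ} (G : SimpleGraph (Fin n)) [DecidableRel G.Adj]
    (t : ℝ) (y : Fin n → ℝ) : qform G (fun i => t * y i) = t ^ 2 * qform G y := by
  unfold qform
  have h : ∀ i j : Fin n, (if G.Adj i j then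
      (t * y i / Real.sqrt (G.degree i) - t * y j / Real.sqrt (G.degree j)) ^ 2 else 0)
      = t ^ 2 * (if G.Adj i j then
      (y i / Real.sqrt (G.degree i) - y j / Real.sqrt (G.degree j)) ^ 2 else 0) := by
    intro i j; split_ifs
    · rw [mul_div_assoc, mul_div_assoc]; ring
    · ring
  simp only [h, ← Finset.mul_sum]
  ring

lemma dirichletEnergy_eq {n k : ℕ} (G : SimpleGraph (Fin n)) [DecidableRel G.Adj]
    (X : Matrix (Fin n) (Fin k) ℝ) :
    dirichletEnergy G X = ∑ c, qform G (fun i => X i c) := by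
  unfold dirichletEnergy qform
  rw [← Finset.mul_sum]
  congr 1
  have hsplit : ∀ (P : Prop) [Decidable P] (g : Fin k → ℝ),
      (if P then ∑ c, g c else 0) = ∑ c, if P then g c else 0 := by
    intro P _ g; split_ifs <;> simp
  calc ∑ i, ∑ j, (if G.Adj i j then
        ∑ c, (X i c / Real.sqrt (G.degree i) - X j c / Real.sqrt (G.degree j)) ^ 2 else 0)
      = ∑ i, ∑ j, ∑ c, (if G.Adj i j then
        (X i c / Real.sqrt (G.degree i) - X j c / Real.sqrt (G.degree j)) ^ 2 else 0) := by
        apply Finset.sum_congr rfl; intro i _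
        apply Finset.sum_congr rfl; intro j _
        exact hsplit _ _
    _ = ∑ i, ∑ c, ∑ j, (if G.Adj i j then
        (X i c / Real.sqrt (G.degree i) - X j c / Real.sqrt (G.degree j)) ^ 2 else 0) :=
        Finset.sum_congr rfl fun i _ => Finset.sum_comm
    _ = ∑ c, ∑ i, ∑ j, (if G.Adj i j then
        (X i c / Real.sqrt (G.degree i) - X j c / Real.sqrt (G.degree j)) ^ 2 else 0) :=
        Finset.sum_comm

lemma muV_eq {n k : ℕ} (v : Fin n → ℝ) (X : Matrix (Fin n) (Fin k) ℝ) :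
    muV v X = ∑ c, ∑ r, (X r c - (∑ m, v m * X m c) * v r) ^ 2 := by
  unfold muV
  rw [Finset.sum_comm]
  apply Finset.sum_congr rfl; intro c _
  apply Finset.sum_congr rfl; intro r _
  congr 1
  simp only [Matrix.sub_apply, Matrix.mul_apply, Matrix.of_apply]
  congr 1
  rw [Finset.sum_mul]
  apply Finset.sum_congr rfl; intro m _
  ring

/-- For a connected graph with positive degrees and
`v = D^{1/2}·1/‖D^{1/2}·1‖₂`, the Dirichlet energy is equivalent to `μ_v`: there are
`C₁, C₂ > 0` with `C₁·μ_v(X) ≤ E(X) ≤ C₂·μ_v(X)` for all `X ∈ ℝ^{n×k}`. -/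
theorem stmt_17 {n k : ℕ}
    (G : SimpleGraph (Fin n)) [DecidableRel G.Adj]
    (hconn : G.Connected)
    (hdeg : ∀ i, 0 < G.degree i)
    (v : Fin n → ℝ)
    (hv : v = fun i => Real.sqrt (G.degree i) / Real.sqrt (∑ j, (G.degree j : ℝ))) :
    ∃ C₁ > (0 : ℝ), ∃ C₂ > (0 : ℝ), ∀ X : Matrix (Fin n) (Fin k) ℝ,
      C₁ * muV v X ≤ dirichletEnergy G X ∧ dirichletEnergy G X ≤ C₂ * muV v X := by
  -- basic facts
  set S : ℝ := ∑ j, (G.degree j : ℝ) with hSdef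
  have hn : Nonempty (Fin n) := hconn.nonempty
  have hS : 0 < S := by
    apply Finset.sum_pos
    · intro i _; exact_mod_cast hdeg i
    · exact Finset.univ_nonempty
  have hsS : 0 < Real.sqrt S := Real.sqrt_pos.2 hS
  have hsd : ∀ i, 0 < Real.sqrt (G.degree i) := fun i =>
    Real.sqrt_pos.2 (by exact_mod_cast hdeg i)
  have hsd2 : ∀ i, Real.sqrt (G.degree i) ^ 2 = (G.degree i : ℝ) := fun i =>
    Real.sq_sqrt (by positivity)
  have hvdef : ∀ i, v i = Real.sqrt (G.degree i) / Real.sqrt S := by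
    intro i; rw [hv]
  -- ∑ v² = 1
  have hv2 : ∑ i, v i ^ 2 = 1 := by
    have : ∀ i, v i ^ 2 = (G.degree i : ℝ) / S := by
      intro i
      rw [hvdef i, div_pow, hsd2, Real.sq_sqrt hS.le]
    rw [Finset.sum_congr rfl fun i _ => this i, ← Finset.sum_div]
    exact div_self hS.ne'
  -- v i / sqrt d i is constant
  have hconst : ∀ i, v i / Real.sqrt (G.degree i) = 1 / Real.sqrt S := by
    intro i
    rw [hvdef i, div_div, mul_comm, ← div_div, div_self (hsd i).ne']
  -- shift invariance of qform
  have qshift : ∀ (t : ℝ) (y : Fin n → ℝ),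
      qform G (fun i => y i - t * v i) = qform G y := by
    intro t y
    unfold qform
    congr 1
    apply Finset.sum_congr rfl; intro i _
    apply Finset.sum_congr rfl; intro j _
    split_ifs
    · congr 1
      rw [sub_div, sub_div, mul_div_assoc, mul_div_assoc, hconst i, hconst j]
      ring
    · rfl
  -- upper bound: qform G y ≤ ∑ y²
  have qle : ∀ y : Fin n → ℝ, qform G y ≤ ∑ i, y i ^ 2 := by
    intro y
    unfold qform
    set a : Fin n → ℝ := fun i => y i / Real.sqrt (G.degree i) with ha
    show (1/4) * (∑ i, ∑ j, (if G.Adj i j then (a i - a j) ^ 2 else 0)) ≤ ∑ i, y i ^ 2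
    have hdegsum : ∀ i, ∑ j, (if G.Adj i j then (1:ℝ) else 0) = (G.degree i : ℝ) := by
      intro i
      have hcard : (Finset.univ.filter (fun j => G.Adj i j)).card = G.degree i := by
        rw [← SimpleGraph.neighborFinset_eq_filter]; rfl
      rw [Finset.sum_boole, hcard]
    have step1 : ∑ i, ∑ j, (if G.Adj i j then (a i - a j) ^ 2 else 0)
        ≤ ∑ i, ∑ j, (if G.Adj i j then 2 * a i ^ 2 + 2 * a j ^ 2 else 0) := by
      apply Finset.sum_le_sum; intro i _
      apply Finset.sum_le_sum; intro j _
      split_ifs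
      · nlinarith [sq_nonneg (a i + a j)]
      · exact le_rfl
    have step2 : ∑ i, ∑ j, (if G.Adj i j then 2 * a i ^ 2 + 2 * a j ^ 2 else 0)
        = 4 * ∑ i, (G.degree i : ℝ) * a i ^ 2 := by
      have e1 : ∀ i j, (if G.Adj i j then 2 * a i ^ 2 + 2 * a j ^ 2 else 0)
          = (if G.Adj i j then 2 * a i ^ 2 else 0) + (if G.Adj i j then 2 * a j ^ 2 else 0) := by
        intro i j; split_ifs <;> simp
      simp_rw [e1, Finset.sum_add_distrib]
      have h1 : ∑ i, ∑ j, (if G.Adj i j then 2 * a i ^ 2 else 0)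
          = 2 * ∑ i, (G.degree i : ℝ) * a i ^ 2 := by
        rw [Finset.mul_sum]
        apply Finset.sum_congr rfl; intro i _
        have : ∑ j, (if G.Adj i j then 2 * a i ^ 2 else 0)
            = 2 * a i ^ 2 * ∑ j, (if G.Adj i j then (1:ℝ) else 0) := by
          rw [Finset.mul_sum]
          apply Finset.sum_congr rfl; intro j _
          split_ifs <;> ring
        rw [this, hdegsum i]; ring
      have h2 : ∑ i, ∑ j, (if G.Adj i j then 2 * a j ^ 2 else 0)
          = 2 * ∑ i, (G.degree i : ℝ) * a i ^ 2 := by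
        rw [Finset.sum_comm, Finset.mul_sum]
        apply Finset.sum_congr rfl; intro j _
        have e : ∑ i, (if G.Adj i j then 2 * a j ^ 2 else 0)
            = ∑ i, (if G.Adj j i then 2 * a j ^ 2 else 0) := by
          apply Finset.sum_congr rfl; intro i _
          exact if_congr (G.adj_comm i j) rfl rfl
        rw [e]
        have e2 : ∑ i, (if G.Adj j i then 2 * a j ^ 2 else 0)
            = 2 * a j ^ 2 * ∑ i, (if G.Adj j i then (1:ℝ) else 0) := by
          rw [Finset.mul_sum]
          apply Finset.sum_congr rfl; intro i _
          split_ifs <;> ring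
        rw [e2, hdegsum j]; ring
      rw [h1, h2]; ring
    have hda : ∀ i, (G.degree i : ℝ) * a i ^ 2 = y i ^ 2 := by
      intro i
      have hd : (G.degree i : ℝ) ≠ 0 := ne_of_gt (by exact_mod_cast hdeg i)
      show (G.degree i : ℝ) * (y i / Real.sqrt (G.degree i)) ^ 2 = y i ^ 2
      rw [div_pow, hsd2, mul_comm]
      exact div_mul_cancel₀ _ hd
    have : ∑ i, (G.degree i : ℝ) * a i ^ 2 = ∑ i, y i ^ 2 :=
      Finset.sum_congr rfl fun i _ => hda i
    calc (1/4) * ∑ i, ∑ j, (if G.Adj i j then (a i - a j) ^ 2 else 0)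
        ≤ (1/4) * (4 * ∑ i, (G.degree i : ℝ) * a i ^ 2) := by
          rw [← step2]; linarith [step1]
      _ = ∑ i, y i ^ 2 := by rw [this]; ring
  -- kernel: qform = 0 and orthogonal to v implies y = 0
  have qker : ∀ y : Fin n → ℝ, qform G y = 0 → (∑ m, v m * y m) = 0 → y = 0 := by
    intro y hq horth
    have hterms : ∀ i j, G.Adj i j →
        y i / Real.sqrt (G.degree i) = y j / Real.sqrt (G.degree j) := by
      have hsum : ∑ i, ∑ j, (if G.Adj i j then
          (y i / Real.sqrt (G.degree i) - y j / Real.sqrt (G.degree j)) ^ 2 else 0) = 0 := by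
        unfold qform at hq; linarith
      have hnn : ∀ i ∈ Finset.univ, (0:ℝ) ≤ ∑ j, (if G.Adj i j then
          (y i / Real.sqrt (G.degree i) - y j / Real.sqrt (G.degree j)) ^ 2 else 0) := by
        intro i _; apply Finset.sum_nonneg; intro j _; split <;> positivity
      intro i j hadj
      have h1 := (Finset.sum_eq_zero_iff_of_nonneg hnn).1 hsum i (Finset.mem_univ i)
      have hnn2 : ∀ j ∈ Finset.univ, (0:ℝ) ≤ (if G.Adj i j then
          (y i / Real.sqrt (G.degree i) - y j / Real.sqrt (G.degree j)) ^ 2 else 0) := by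
        intro j _; split <;> positivity
      have h2 := (Finset.sum_eq_zero_iff_of_nonneg hnn2).1 h1 j (Finset.mem_univ j)
      rw [if_pos hadj] at h2
      have := pow_eq_zero_iff (n := 2) (by norm_num) |>.1 h2
      linarith [this]
    set a : Fin n → ℝ := fun i => y i / Real.sqrt (G.degree i) with ha
    have hwalk : ∀ i j : Fin n, a i = a j := by
      intro i j
      obtain ⟨w⟩ := hconn.preconnected i j
      induction w with
      | nil => rfl
      | cons h p ih => exact (hterms _ _ h).trans ih
    have hyi : ∀ i, y i = a i * Real.sqrt (G.degree i) := by
      intro i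
      show y i = (y i / Real.sqrt (G.degree i)) * Real.sqrt (G.degree i)
      rw [div_mul_cancel₀ _ (hsd i).ne']
    funext i
    have horth2 : (a i / Real.sqrt S) * S = 0 := by
      have : ∑ m, v m * y m = (a i / Real.sqrt S) * S := by
        rw [hSdef, Finset.mul_sum]
        apply Finset.sum_congr rfl; intro m _
        rw [hvdef m, hyi m, ← hwalk i m]
        rw [show Real.sqrt (G.degree m) / Real.sqrt S * (a i * Real.sqrt (G.degree m))
            = (Real.sqrt (G.degree m) * Real.sqrt (G.degree m)) * a i / Real.sqrt S from by ring,
          Real.mul_self_sqrt (by positivity)]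
        ring
      rw [← this, horth]
    have hai : a i = 0 := by
      have h3 : a i * (S / Real.sqrt S) = 0 := by
        rw [← horth2]; ring
      have : S / Real.sqrt S ≠ 0 := by positivity
      exact (mul_eq_zero.1 h3).resolve_right this
    simp [hyi i, hai]
  -- continuity of qform
  have qcont : Continuous (qform G) := by
    unfold qform
    apply Continuous.mul continuous_const
    apply continuous_finset_sum; intro i _
    apply continuous_finset_sum; intro j _
    split_ifs
    · exact (((continuous_apply i).div_const _).sub ((continuous_apply j).div_const _)).pow 2
    · exact continuous_const
  -- projection facts
  have horthP : ∀ y : Fin n → ℝ,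
      (∑ m, v m * (y m - (∑ l, v l * y l) * v m)) = 0 := by
    intro y
    have : ∑ m, v m * (y m - (∑ l, v l * y l) * v m)
        = (∑ m, v m * y m) - (∑ l, v l * y l) * ∑ m, v m ^ 2 := by
      rw [Finset.mul_sum, ← Finset.sum_sub_distrib]
      apply Finset.sum_congr rfl; intro m _; ring
    rw [this, hv2]; ring
  -- the compact set
  set Sset : Set (Fin n → ℝ) := {y | ∑ i, y i ^ 2 = 1 ∧ ∑ m, v m * y m = 0} with hSset
  have hclosed : IsClosed Sset := by
    apply IsClosed.inter
    · exact isClosed_eq (continuous_finset_sum _ fun i _ => (continuous_apply i).pow 2)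
        continuous_const
    · exact isClosed_eq (continuous_finset_sum _ fun m _ =>
        continuous_const.mul (continuous_apply m)) continuous_const
  have hsub : Sset ⊆ Metric.closedBall 0 1 := by
    intro y hy
    rw [Metric.mem_closedBall, dist_zero_right]
    rw [pi_norm_le_iff_of_nonneg zero_le_one]
    intro i
    have h1 : y i ^ 2 ≤ 1 := by
      rw [← hy.1]
      exact Finset.single_le_sum (fun j _ => sq_nonneg (y j)) (Finset.mem_univ i)
    have : |y i| ≤ 1 := by nlinarith [abs_nonneg (y i), sq_abs (y i)]
    simpa using this
  have hcompact : IsCompact Sset :=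
    (isCompact_closedBall (0 : Fin n → ℝ) 1).of_isClosed_subset hclosed hsub
  by_cases hne : Sset.Nonempty
  · -- main case
    obtain ⟨y₀, hy₀S, hy₀min⟩ := hcompact.exists_isMinOn hne qcont.continuousOn
    have hC₁pos : 0 < qform G y₀ := by
      rcases lt_or_eq_of_le (qform_nonneg G y₀) with h | h
      · exact h
      · exfalso
        have h0 := qker y₀ h.symm hy₀S.2
        have h1 := hy₀S.1
        rw [h0] at h1
        simp at h1
    refine ⟨qform G y₀, hC₁pos, 1, one_pos, fun X => ?_⟩
    -- column decomposition
    set z : Fin k → Fin n → ℝ :=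
      fun c i => X i c - (∑ m, v m * X m c) * v i with hz
    have hmu : muV v X = ∑ c, ∑ r, z c r ^ 2 := muV_eq v X
    have hE : dirichletEnergy G X = ∑ c, qform G (z c) := by
      rw [dirichletEnergy_eq]
      apply Finset.sum_congr rfl; intro c _
      exact (qshift (∑ m, v m * X m c) (fun i => X i c)).symm
    have horthz : ∀ c, ∑ m, v m * z c m = 0 := fun c => horthP (fun i => X i c)
    constructor
    · -- lower bound
      rw [hmu, hE, Finset.mul_sum]
      apply Finset.sum_le_sum; intro c _
      by_cases hzc : z c = 0
      · rw [hzc, qform_zero]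
        simp
      · set c2 : ℝ := ∑ r, z c r ^ 2 with hc2
        have hc2pos : 0 < c2 := by
          obtain ⟨i, hi⟩ := Function.ne_iff.1 hzc
          have hi' : z c i ≠ 0 := hi
          exact Finset.sum_pos' (fun r _ => sq_nonneg _)
            ⟨i, Finset.mem_univ i, lt_of_le_of_ne (sq_nonneg _) (Ne.symm (pow_ne_zero 2 hi'))⟩
        set t : ℝ := Real.sqrt c2 with ht
        have htpos : 0 < t := Real.sqrt_pos.2 hc2pos
        have ht2 : t ^ 2 = c2 := Real.sq_sqrt hc2pos.le
        set w : Fin n → ℝ := fun r => (1 / t) * z c r with hw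
        have hwS : w ∈ Sset := by
          constructor
          · show ∑ i, w i ^ 2 = 1
            have : ∑ i, w i ^ 2 = (1/t)^2 * c2 := by
              rw [hc2, Finset.mul_sum]
              apply Finset.sum_congr rfl; intro i _
              rw [hw]; ring
            rw [this, ← ht2]
            field_simp
          · show ∑ m, v m * w m = 0
            have : ∑ m, v m * w m = (1/t) * ∑ m, v m * z c m := by
              rw [Finset.mul_sum]
              apply Finset.sum_congr rfl; intro m _
              rw [hw]; ring
            rw [this, horthz c, mul_zero]
        have hzw : z c = fun r => t * w r := by
          funext r; rw [hw]; field_simp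
        have : qform G (z c) = t ^ 2 * qform G w := by
          rw [hzw]; exact qform_smul G t w
        rw [this, ht2]
        have := hy₀min hwS
        calc qform G y₀ * c2 = c2 * qform G y₀ := by ring
          _ ≤ c2 * qform G w := by
              apply mul_le_mul_of_nonneg_left this hc2pos.le
    · -- upper bound
      rw [hmu, hE, one_mul]
      apply Finset.sum_le_sum; intro c _
      exact qle (z c)
  · -- degenerate case: Sset empty
    have hker : ∀ y : Fin n → ℝ, ∑ m, v m * y m = 0 → y = 0 := by
      intro y horth
      by_contra hy
      obtain ⟨i, hi⟩ := Function.ne_iff.1 hy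
      have hi' : y i ≠ 0 := hi
      set c2 : ℝ := ∑ r, y r ^ 2 with hc2
      have hc2pos : 0 < c2 :=
        Finset.sum_pos' (fun r _ => sq_nonneg _)
          ⟨i, Finset.mem_univ i, lt_of_le_of_ne (sq_nonneg _) (Ne.symm (pow_ne_zero 2 hi'))⟩
      set t : ℝ := Real.sqrt c2 with ht
      have htpos : 0 < t := Real.sqrt_pos.2 hc2pos
      have ht2 : t ^ 2 = c2 := Real.sq_sqrt hc2pos.le
      apply hne
      refine ⟨fun r => (1/t) * y r, ?_, ?_⟩
      · show ∑ r, ((1/t) * y r) ^ 2 = 1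
        have : ∑ r, ((1/t) * y r) ^ 2 = (1/t)^2 * c2 := by
          rw [hc2, Finset.mul_sum]
          apply Finset.sum_congr rfl; intro r _; ring
        rw [this, ← ht2]; field_simp
      · show ∑ m, v m * ((1/t) * y m) = 0
        have : ∑ m, v m * ((1/t) * y m) = (1/t) * ∑ m, v m * y m := by
          rw [Finset.mul_sum]
          apply Finset.sum_congr rfl; intro m _; ring
        rw [this, horth, mul_zero]
    refine ⟨1, one_pos, 1, one_pos, fun X => ?_⟩
    set z : Fin k → Fin n → ℝ :=
      fun c i => X i c - (∑ m, v m * X m c) * v i with hz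
    have hzzero : ∀ c, z c = 0 := fun c => hker (z c) (horthP (fun i => X i c))
    have hmu : muV v X = 0 := by
      rw [muV_eq]
      apply Finset.sum_eq_zero; intro c _
      apply Finset.sum_eq_zero; intro r _
      have hzr : X r c - (∑ m, v m * X m c) * v r = 0 := congrFun (hzzero c) r
      rw [hzr]
      norm_num
    have hE : dirichletEnergy G X = 0 := by
      rw [dirichletEnergy_eq]
      apply Finset.sum_eq_zero; intro c _
      have h1 : qform G (fun i => X i c) = qform G (z c) :=
        (qshift (∑ m, v m * X m c) (fun i => X i c)).symm
      rw [h1, hzzero c]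
      exact qform_zero G
    rw [hmu, hE]
    norm_num
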